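/- Let ψ₁, ψ₂ ∈ ℂ′ with ψ₂ invertible in ℂ′ and δ := Re(ψ₂ψ̄₂ − ψ₁ψ̄₁) ≠ 0, and set g := i′·ψ̄₁·ψ₂⁻¹. Then 1 + Re(g·ḡ) = δ / Re(ψ₂ψ̄₂) ≠ 0, and the inverse stereographic projection of g, namely P(g) := ((2·Re g)/s, (2·Im g)/s, Re(1 − g·ḡ)/s) with s := 1 + Re(g·ḡ), equals (1/δ)·(−2·Im(ψ₁ψ₂), 2·Re(ψ₁ψ₂), Re(ψ₂ψ̄₂ + ψ₁ψ̄₁)). -/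

import Mathlib

noncomputable section

/-- Para-complex numbers modeled as the product ring ℝ × ℝ. -/
abbrev Cp : Type := ℝ × ℝ

/-- The para-complex unit i′ = (1, -1), satisfying i′² = 1. -/
def ip : Cp := (1, -1)

/-- Para-complex conjugation. -/
def pconj (z : Cp) : Cp := (z.2, z.1)

/-- Real part of a para-complex number. -/
def pRe (z : Cp) : ℝ := (z.1 + z.2) / 2

/-- Imaginary part of a para-complex number. -/
def pIm (z : Cp) : ℝ := (z.1 - z.2) / 2

/-- Embedding of ℝ into the para-complex numbers. -/
def oR (r : ℝ) : Cp := (r, r)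

/-- The exponential of the Banach algebra ℝ × ℝ (componentwise real exponential). -/
def pexp (z : Cp) : Cp := (Real.exp z.1, Real.exp z.2)

/-- The para-complex derivative ∂_z f = ½(∂ₓf + i′ ∂_y f). -/
def dz (f : Cp → Cp) (p : Cp) : Cp :=
  oR (1/2) * (fderiv ℝ f p (1, 0) + ip * fderiv ℝ f p (0, 1))

/-- The para-complex derivative ∂_z̄ f = ½(∂ₓf − i′ ∂_y f). -/
def dzbar (f : Cp → Cp) (p : Cp) : Cp :=
  oR (1/2) * (fderiv ℝ f p (1, 0) - ip * fderiv ℝ f p (0, 1))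

/-- The inverse stereographic projection of the projected normal Gauss map
g = i′ ψ̄₁ ψ₂⁻¹ recovers the represented normal Gauss map. -/
theorem gauss_map_stereographic (ψ₁ ψ₂ : Cp) (hψ₂ : ψ₂ * pconj ψ₂ ≠ 0)
    (δ : ℝ) (hδdef : δ = pRe (ψ₂ * pconj ψ₂ - ψ₁ * pconj ψ₁)) (hδ : δ ≠ 0)
    (g : Cp) (hg : g = ip * pconj ψ₁ * ψ₂⁻¹)
    (s : ℝ) (hs : s = 1 + pRe (g * pconj g)) :
    s = δ / pRe (ψ₂ * pconj ψ₂) ∧ s ≠ 0 ∧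
    (2 * pRe g / s, 2 * pIm g / s, pRe (1 - g * pconj g) / s) =
      ((1 / δ) * (-2 * pIm (ψ₁ * ψ₂)), (1 / δ) * (2 * pRe (ψ₁ * ψ₂)),
        (1 / δ) * pRe (ψ₂ * pconj ψ₂ + ψ₁ * pconj ψ₁)) := by
  obtain ⟨a, b⟩ := ψ₁
  obtain ⟨c, d⟩ := ψ₂
  have hc : c ≠ 0 := by
    intro h; apply hψ₂
    simp [pconj, Prod.ext_iff, h, Prod.mul_def]
  have hd : d ≠ 0 := by
    intro h; apply hψ₂
    simp [pconj, Prod.ext_iff, h, Prod.mul_def]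
  have hcd : c * d ≠ 0 := mul_ne_zero hc hd
  have hinv : ((c, d) : Cp)⁻¹ = (c⁻¹, d⁻¹) := rfl
  subst hδdef hg hs
  simp only [hinv, pconj, pRe, pIm, ip, Prod.mul_def, Prod.sub_def, Prod.ext_iff,
    Prod.fst_one, Prod.snd_one, Prod.fst_add, Prod.snd_add] at *
  have hδ' : c * d - a * b ≠ 0 := by
    intro h; apply hδ; simp; linarith
  have hS : 1 + (1 * b * c⁻¹ * (-1 * a * d⁻¹) + -1 * a * d⁻¹ * (1 * b * c⁻¹)) / 2
      = (c * d - a * b) / (c * d) := by field_simp; ring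
  have hSne : (c * d - a * b) / (c * d) ≠ 0 := div_ne_zero hδ' hcd
  rw [hS]
  refine ⟨?_, hSne, ?_, ?_, ?_⟩
  · rw [div_eq_div_iff hcd (by intro h; apply hcd; linarith)]
    ring
  all_goals
    rw [show (c * d - a * b + (d * c - b * a)) / 2 = c * d - a * b from by ring,
      div_div_eq_mul_div, div_eq_iff hδ']
    have hδ'' : c * d - b * a ≠ 0 := by rw [mul_comm b a]; exact hδ'
    field_simp
    ring
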